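/- Let V : C(S^{n-1})₊ → ℝ be a valuation with bounded variation, and define |V|(f) = |V|([0,f]). Then |V| : C(S^{n-1})₊ → ℝ is itself a valuation: |V|(f∨g) + |V|(f∧g) = |V|(f) + |V|(g) for all f, g ∈ C(S^{n-1})₊. -/
import Mathlib


open MeasureTheory Filter Topology

variable {n : ℕ}

/-- The set of chain sums `Σ |V(f_k) − V(f_{k−1})|` over finite increasing chains
`f = f_0 ≤ f_1 ≤ ⋯ ≤ f_m = g` in `C(S^{n-1})₊`. -/
def chainSums (V : C(Metric.sphere (0 : EuclideanSpace ℝ (Fin n)) 1, ℝ) → ℝ)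
    (f g : C(Metric.sphere (0 : EuclideanSpace ℝ (Fin n)) 1, ℝ)) : Set ℝ :=
  {x | ∃ (m : ℕ) (c : ℕ → C(Metric.sphere (0 : EuclideanSpace ℝ (Fin n)) 1, ℝ)),
    c 0 = f ∧ c m = g ∧ (∀ k < m, c k ≤ c (k+1)) ∧ (∀ k ≤ m, 0 ≤ c k) ∧
    x = ∑ k ∈ Finset.range m, |V (c (k+1)) - V (c k)|}

/-- The variation `|V|([f,g])` of `V` on the order interval `[f,g]`. -/
noncomputable def variation (V : C(Metric.sphere (0 : EuclideanSpace ℝ (Fin n)) 1, ℝ) → ℝ)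
    (f g : C(Metric.sphere (0 : EuclideanSpace ℝ (Fin n)) 1, ℝ)) : ℝ :=
  sSup (chainSums V f g)

private abbrev CSph (n : ℕ) := C(Metric.sphere (0 : EuclideanSpace ℝ (Fin n)) 1, ℝ)

private lemma chain_mono {α : Type*} [Preorder α] {c : ℕ → α} {m : ℕ}
    (h : ∀ k < m, c k ≤ c (k+1)) : ∀ i j, i ≤ j → j ≤ m → c i ≤ c j := by
  intro i j hij hjm
  induction j with
  | zero => simp [Nat.le_zero.mp hij]
  | succ j ih =>
    rcases Nat.lt_or_ge i (j+1) with h1 | h1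
    · exact (ih (Nat.lt_succ_iff.mp h1) (le_trans (Nat.le_succ j) hjm)).trans
        (h j (Nat.lt_of_succ_le hjm))
    · have : i = j + 1 := le_antisymm hij h1
      simp [this]

private lemma chainSums_nonempty (V : CSph n → ℝ) {f g : CSph n}
    (hf : 0 ≤ f) (hfg : f ≤ g) : (chainSums V f g).Nonempty := by
  refine ⟨|V g - V f|, 1, fun k => if k = 0 then f else g, by simp, by simp, ?_, ?_, by simp⟩
  · intro k hk
    interval_cases k
    simpa using hfg
  · intro k hk
    by_cases h : k = 0 <;> simp [h, hf, hf.trans hfg]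

private lemma chainSums_concat (V : CSph n → ℝ) {a b c : CSph n} {x y : ℝ}
    (hx : x ∈ chainSums V a b) (hy : y ∈ chainSums V b c) :
    x + y ∈ chainSums V a c := by
  obtain ⟨m1, c1, h10, h1m, h1mono, h1pos, rfl⟩ := hx
  obtain ⟨m2, c2, h20, h2m, h2mono, h2pos, rfl⟩ := hy
  refine ⟨m1 + m2, fun k => if k ≤ m1 then c1 k else c2 (k - m1), by simp [h10], ?_, ?_, ?_, ?_⟩
  · rcases Nat.eq_zero_or_pos m2 with h | h
    · simp [h, ← h2m, h, h1m, h20]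
    · have : ¬ (m1 + m2 ≤ m1) := by omega
      simpa [this] using h2m
  · intro k hk
    rcases le_or_gt (k + 1) m1 with h | h
    · simp only [h, le_of_lt (Nat.lt_of_succ_le h), if_true]
      exact h1mono k (Nat.lt_of_succ_le h)
    · rcases le_or_gt k m1 with h' | h'
      · have hk1 : k = m1 := le_antisymm h' (by omega)
        subst hk1
        have hm2 : 0 < m2 := by omega
        have hxx : ¬ (k + 1 ≤ k) := by omega
        have h3 : k + 1 - k = 1 := by omega
        simp only [le_refl, if_true, hxx, if_false, h3, h1m]
        rw [← h20]
        exact h2mono 0 hm2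
      · have h1 : ¬ (k ≤ m1) := by omega
        have h2 : ¬ (k + 1 ≤ m1) := by omega
        simp only [h1, h2, if_false]
        have : k + 1 - m1 = (k - m1) + 1 := by omega
        rw [this]
        exact h2mono (k - m1) (by omega)
  · intro k hk
    by_cases h : k ≤ m1
    · simpa [h] using h1pos k h
    · simpa [h] using h2pos (k - m1) (by omega)
  · rw [← Finset.sum_range_add_sum_Ico _ (Nat.le_add_right m1 m2),
      Finset.sum_Ico_eq_sum_range]
    congr 1
    · apply Finset.sum_congr rfl
      intro k hk
      have hk := Finset.mem_range.mp hk
      have h1 : k ≤ m1 := le_of_lt hk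
      have h2 : k + 1 ≤ m1 := hk
      simp [h1, h2]
    · have hm : m1 + m2 - m1 = m2 := by omega
      rw [hm]
      apply Finset.sum_congr rfl
      intro k hk
      have hk := Finset.mem_range.mp hk
      have h2 : ¬ (m1 + k + 1 ≤ m1) := by omega
      have h3 : m1 + k + 1 - m1 = k + 1 := by omega
      have h4 : m1 + k - m1 = k := by omega
      by_cases h : k = 0
      · simp [h, h2, h1m, h20]
      · have h5 : ¬ (m1 + k ≤ m1) := by omega
        simp [h2, h5, h3, h4]

private lemma chainSums_refine (V : CSph n → ℝ)
    (hval : ∀ f g : CSph n, 0 ≤ f → 0 ≤ g → V (f ⊔ g) + V (f ⊓ g) = V f + V g)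
    {a b c : CSph n} (ha : 0 ≤ a) (hab : a ≤ b) (hbc : b ≤ c) {x : ℝ}
    (hx : x ∈ chainSums V a c) :
    ∃ y ∈ chainSums V a b, ∃ z ∈ chainSums V b c, x ≤ y + z := by
  obtain ⟨m, ch, h0, hm, hmono, hpos, rfl⟩ := hx
  have hb : (0 : CSph n) ≤ b := ha.trans hab
  refine ⟨_, ⟨m, fun k => ch k ⊓ b, by simp [h0, inf_eq_left.mpr hab],
      by simp [hm, inf_eq_right.mpr hbc], fun k hk => inf_le_inf_right _ (hmono k hk),
      fun k hk => le_inf (hpos k hk) hb, rfl⟩,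
    _, ⟨m, fun k => ch k ⊔ b, by simp [h0, sup_eq_right.mpr hab],
      by simp [hm, sup_eq_left.mpr hbc], fun k hk => sup_le_sup_right (hmono k hk) _,
      fun k hk => hb.trans le_sup_right, rfl⟩, ?_⟩
  rw [← Finset.sum_add_distrib]
  apply Finset.sum_le_sum
  intro k hk
  have hk := Finset.mem_range.mp hk
  have h1 := hval (ch (k+1)) b (hpos (k+1) hk) hb
  have h2 := hval (ch k) b (hpos k (le_of_lt hk)) hb
  have heq : V (ch (k+1)) - V (ch k) =
      (V (ch (k+1) ⊓ b) - V (ch k ⊓ b)) + (V (ch (k+1) ⊔ b) - V (ch k ⊔ b)) := by linarith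
  calc |V (ch (k+1)) - V (ch k)|
      = |(V (ch (k+1) ⊓ b) - V (ch k ⊓ b)) + (V (ch (k+1) ⊔ b) - V (ch k ⊔ b))| := by rw [heq]
    _ ≤ |V (ch (k+1) ⊓ b) - V (ch k ⊓ b)| + |V (ch (k+1) ⊔ b) - V (ch k ⊔ b)| := abs_add_le _ _

private lemma variation_split (V : CSph n → ℝ)
    (hval : ∀ f g : CSph n, 0 ≤ f → 0 ≤ g → V (f ⊔ g) + V (f ⊓ g) = V f + V g)
    (hbv : ∀ f g : CSph n, 0 ≤ f → f ≤ g → BddAbove (chainSums V f g))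
    {a b c : CSph n} (ha : 0 ≤ a) (hab : a ≤ b) (hbc : b ≤ c) :
    variation V a c = variation V a b + variation V b c := by
  have hb : (0 : CSph n) ≤ b := ha.trans hab
  have hA := hbv a b ha hab
  have hB := hbv b c hb hbc
  have hC := hbv a c ha (hab.trans hbc)
  have neA := chainSums_nonempty V ha hab
  have neB := chainSums_nonempty V hb hbc
  have neC := chainSums_nonempty V ha (hab.trans hbc)
  apply le_antisymm
  · apply csSup_le neC
    intro x hx
    obtain ⟨y, hy, z, hz, hxyz⟩ := chainSums_refine V hval ha hab hbc hx
    exact hxyz.trans (add_le_add (le_csSup hA hy) (le_csSup hB hz))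
  · have key : ∀ y ∈ chainSums V a b, ∀ z ∈ chainSums V b c,
        y + z ≤ sSup (chainSums V a c) :=
      fun y hy z hz => le_csSup hC (chainSums_concat V hy hz)
    have h1 : ∀ y ∈ chainSums V a b, y ≤ sSup (chainSums V a c) - sSup (chainSums V b c) := by
      intro y hy
      have : sSup (chainSums V b c) ≤ sSup (chainSums V a c) - y :=
        csSup_le neB (fun z hz => by linarith [key y hy z hz])
      linarith
    have := csSup_le neA h1
    unfold variation
    linarith

private lemma chainSums_map (V : CSph n → ℝ) {a b a' b' : CSph n}
    (φ : CSph n → CSph n) (hφa : φ a = a') (hφb : φ b = b')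
    (hmono : ∀ u v : CSph n, u ≤ v → φ u ≤ φ v)
    (hpos : ∀ u : CSph n, a ≤ u → u ≤ b → 0 ≤ φ u)
    (t : ℝ) (hV : ∀ u : CSph n, a ≤ u → u ≤ b → V (φ u) = V u + t) :
    chainSums V a b ⊆ chainSums V a' b' := by
  rintro x ⟨m, ch, h0, hm, hcmono, hcpos, rfl⟩
  have hbtw : ∀ k ≤ m, a ≤ ch k ∧ ch k ≤ b := fun k hk =>
    ⟨h0 ▸ chain_mono hcmono 0 k (Nat.zero_le k) hk, hm ▸ chain_mono hcmono k m hk le_rfl⟩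
  refine ⟨m, fun k => φ (ch k), by simp only [h0, hφa], by simp only [hm, hφb], fun k hk => hmono _ _ (hcmono k hk),
    fun k hk => hpos _ (hbtw k hk).1 (hbtw k hk).2, ?_⟩
  apply Finset.sum_congr rfl
  intro k hk
  have hk := Finset.mem_range.mp hk
  rw [hV _ (hbtw (k+1) hk).1 (hbtw (k+1) hk).2, hV _ (hbtw k (le_of_lt hk)).1
    (hbtw k (le_of_lt hk)).2]
  ring_nf

private lemma chainSums_transfer (V : CSph n → ℝ)
    (hval : ∀ f g : CSph n, 0 ≤ f → 0 ≤ g → V (f ⊔ g) + V (f ⊓ g) = V f + V g)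
    {f g : CSph n} (hf : 0 ≤ f) (hg : 0 ≤ g) :
    chainSums V (f ⊓ g) f = chainSums V g (f ⊔ g) := by
  apply le_antisymm
  · apply chainSums_map V (fun u => u ⊔ g) (by simp) rfl
      (fun u v h => sup_le_sup_right h _) (fun u _ _ => hg.trans le_sup_right)
      (V g - V (f ⊓ g))
    intro u hu1 hu2
    have hu0 : (0 : CSph n) ≤ u := le_trans (le_inf hf hg) hu1
    have h := hval u g hu0 hg
    have hinf : u ⊓ g = f ⊓ g :=
      le_antisymm (inf_le_inf_right _ hu2) (le_inf hu1 inf_le_right)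
    rw [hinf] at h
    linarith
  · apply chainSums_map V (fun u => u ⊓ f) (by simp [inf_comm]) (by simp)
      (fun u v h => inf_le_inf_right _ h)
      (fun u hu _ => le_inf (hg.trans hu) hf) (V f - V (f ⊔ g))
    intro u hu1 hu2
    have hu0 : (0 : CSph n) ≤ u := hg.trans hu1
    have h := hval u f hu0 hf
    have hsup : u ⊔ f = f ⊔ g :=
      le_antisymm (sup_le hu2 le_sup_left) (sup_le le_sup_right (hu1.trans le_sup_left))
    rw [hsup] at h
    linarith

/-- The variation function `|V|(f) = |V|([0,f])` of a valuation of bounded variation is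
itself a valuation on `C(S^{n-1})₊`. -/
theorem stmt9 (V : C(Metric.sphere (0 : EuclideanSpace ℝ (Fin n)) 1, ℝ) → ℝ)
    (hval : ∀ f g, 0 ≤ f → 0 ≤ g → V (f ⊔ g) + V (f ⊓ g) = V f + V g)
    (hbv : ∀ f g, 0 ≤ f → f ≤ g → BddAbove (chainSums V f g))
    (f g : C(Metric.sphere (0 : EuclideanSpace ℝ (Fin n)) 1, ℝ))
    (hf : 0 ≤ f) (hg : 0 ≤ g) :
    variation V 0 (f ⊔ g) + variation V 0 (f ⊓ g) = variation V 0 f + variation V 0 g := by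
  have hfg : (0 : CSph n) ≤ f ⊓ g := le_inf hf hg
  have h1 : variation V 0 (f ⊔ g) = variation V 0 g + variation V g (f ⊔ g) :=
    variation_split V hval hbv le_rfl hg le_sup_right
  have h2 : variation V 0 f = variation V 0 (f ⊓ g) + variation V (f ⊓ g) f :=
    variation_split V hval hbv le_rfl hfg inf_le_left
  have h3 : variation V (f ⊓ g) f = variation V g (f ⊔ g) := by
    unfold variation
    rw [chainSums_transfer V hval hf hg]
  linarith
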